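/- Fractional Rademacher complexity of the kernel-based hypothesis class for (reweighted) univariate losses: let ℍ be a real Hilbert space and Φ : 𝒳 → ℍ with ⟨Φ(x), Φ(x)⟩ ≤ r² for all x ∈ 𝒳. Let K ≥ 1 and n ≥ 2, and for each k ∈ [K] let n_k⁺, n_k⁻ ≥ 1 with n_k⁺ + n_k⁻ = n, τ_k = min(n_k⁺, n_k⁻)/n, m_k = n_k⁺ n_k⁻, reweighting constants a_k⁺, a_k⁻ ≥ 0, and points (x⁺_{ki}, x⁻_{ki})_{i∈[m_k]} of 𝒳 × 𝒳. Let {(I_{kj}, ω_{kj})}_{j∈[J_k]} be a family with I_{kj} ⊆ [m_k] and ω_{kj} > 0 such that ∑_{j : i ∈ I_{kj}} ω_{kj} = 1 for every i ∈ [m_k] and ∑_{j∈[J_k]} ω_{kj} = max(n_k⁺, n_k⁻). Then (1/K) ∑_{k=1}^K 2^{−2m_k} ∑_{(σ⁺,σ⁻)∈{−1,1}^{m_k}×{−1,1}^{m_k}} (1/m_k) ∑_{j∈[J_k]} ω_{kj} · sup_{w∈ℍ, ‖w‖≤B} ∑_{i∈I_{kj}} ( σ⁺_i a_k⁺ ⟨w,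 Φ(x⁺_{ki})⟩ + σ⁻_i a_k⁻ ⟨w, Φ(x⁻_{ki})⟩ ) ≤ (B r / √n) · ( (1/K) ∑_{k=1}^K √(1/τ_k) · (a_k⁺ + a_k⁻) ). In particular, with a_k⁺ = n_k⁺/n and a_k⁻ = n_k⁻/n (the loss L_{u1}) the right-hand side is at most (B r / √n)( (1/K) ∑_k √(1/τ_k) ), and with a_k⁺ = a_k⁻ = 1 (the loss L_{u2}) it equals (2 B r / √n)( (1/K) ∑_k √(1/τ_k) ). -/

import Mathlib

open scoped BigOperators RealInnerProductSpace

lemma sign_cancel {κ : Type*} [Fintype κ] [DecidableEq κ] {i j : κ} (hij : i ≠ j) :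
    ∑ σ : κ → Bool, ((if σ i then (1:ℝ) else -1) * (if σ j then (1:ℝ) else -1)) = 0 := by
  refine Finset.sum_involution (fun σ _ => Function.update σ i (!σ i)) ?_ ?_ ?_ ?_
  · intro σ _
    rw [Function.update_self, Function.update_of_ne hij.symm]
    cases h1 : σ i <;> cases h2 : σ j <;> norm_num
  · intro σ _ _ heq
    have := congrFun heq i
    simp at this
  · intro σ _; exact Finset.mem_univ _
  · intro σ _
    rw [Function.update_self, Function.update_idem, Bool.not_not, Function.update_eq_self]

lemma sum_norm_sq_signs {H : Type*} [NormedAddCommGroup H] [InnerProductSpace ℝ H]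
    {κ : Type*} [Fintype κ] [DecidableEq κ] (t : Finset κ) (u : κ → H) :
    ∑ σ : κ → Bool, ‖∑ i ∈ t, (if σ i then (1:ℝ) else -1) • u i‖ ^ 2
      = 2 ^ (Fintype.card κ) * ∑ i ∈ t, ‖u i‖ ^ 2 := by
  have expand : ∀ σ : κ → Bool,
      ‖∑ i ∈ t, (if σ i then (1:ℝ) else -1) • u i‖ ^ 2
        = ∑ i ∈ t, ∑ j ∈ t,
            ((if σ i then (1:ℝ) else -1) * (if σ j then (1:ℝ) else -1)) * ⟪u i, u j⟫ := by
    intro σ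
    rw [← real_inner_self_eq_norm_sq, sum_inner]
    refine Finset.sum_congr rfl fun i _ => ?_
    rw [inner_sum]
    refine Finset.sum_congr rfl fun j _ => ?_
    rw [real_inner_smul_left, real_inner_smul_right]; ring
  simp_rw [expand]
  rw [Finset.sum_comm, Finset.mul_sum]
  refine Finset.sum_congr rfl fun i hi => ?_
  rw [Finset.sum_comm]
  rw [Finset.sum_eq_single_of_mem i hi (fun j _ hj => ?_)]
  · have h1 : ∀ σ : κ → Bool,
        ((if σ i then (1:ℝ) else -1) * (if σ i then (1:ℝ) else -1)) * ⟪u i, u i⟫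
          = ⟪u i, u i⟫ := by
      intro σ; cases h : σ i <;> norm_num
    simp_rw [h1]
    rw [Finset.sum_const, Finset.card_univ]
    simp [Fintype.card_fun, real_inner_self_eq_norm_sq, nsmul_eq_mul]
  · rw [← Finset.sum_mul, sign_cancel (Ne.symm hj), zero_mul]

lemma sum_norm_signs_le {H : Type*} [NormedAddCommGroup H] [InnerProductSpace ℝ H]
    {κ : Type*} [Fintype κ] [DecidableEq κ] (t : Finset κ) (u : κ → H) :
    ∑ σ : κ → Bool, ‖∑ i ∈ t, (if σ i then (1:ℝ) else -1) • u i‖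
      ≤ 2 ^ (Fintype.card κ) * Real.sqrt (∑ i ∈ t, ‖u i‖ ^ 2) := by
  set S := ∑ σ : κ → Bool, ‖∑ i ∈ t, (if σ i then (1:ℝ) else -1) • u i‖ with hS
  have hSnn : 0 ≤ S := Finset.sum_nonneg fun _ _ => norm_nonneg _
  have hQnn : 0 ≤ ∑ i ∈ t, ‖u i‖ ^ 2 := Finset.sum_nonneg fun _ _ => sq_nonneg _
  have hcs := Finset.sum_mul_sq_le_sq_mul_sq Finset.univ (fun _ : κ → Bool => (1:ℝ))
    (fun σ => ‖∑ i ∈ t, (if σ i then (1:ℝ) else -1) • u i‖)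
  simp only [one_mul, one_pow, Finset.sum_const, Finset.card_univ, nsmul_eq_mul, mul_one] at hcs
  rw [sum_norm_sq_signs t u] at hcs
  have hcard : (Fintype.card (κ → Bool) : ℝ) = 2 ^ (Fintype.card κ) := by
    simp [Fintype.card_fun]
  rw [hcard] at hcs
  have h2 : S ^ 2 ≤ ((2:ℝ) ^ (Fintype.card κ)) ^ 2 * ∑ i ∈ t, ‖u i‖ ^ 2 := by
    calc S ^ 2 ≤ (2:ℝ) ^ (Fintype.card κ) * ((2:ℝ) ^ (Fintype.card κ) * ∑ i ∈ t, ‖u i‖ ^ 2) := hcs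
    _ = ((2:ℝ) ^ (Fintype.card κ)) ^ 2 * ∑ i ∈ t, ‖u i‖ ^ 2 := by ring
  have := (Real.le_sqrt hSnn (by positivity)).2 h2
  rwa [Real.sqrt_mul (by positivity), Real.sqrt_sq (by positivity)] at this

lemma sum_w_sqrt_le {J : ℕ} (w : Fin J → ℝ) (hw : ∀ j, 0 ≤ w j) (c : Fin J → ℝ)
    (hc : ∀ j, 0 ≤ c j) :
    ∑ j, w j * Real.sqrt (c j)
      ≤ Real.sqrt (∑ j, w j) * Real.sqrt (∑ j, w j * c j) := by
  have h := Finset.sum_mul_sq_le_sq_mul_sq Finset.univ (fun j => Real.sqrt (w j))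
    (fun j => Real.sqrt (w j) * Real.sqrt (c j))
  have e1 : ∀ j : Fin J, Real.sqrt (w j) * (Real.sqrt (w j) * Real.sqrt (c j))
      = w j * Real.sqrt (c j) := by
    intro j; rw [← mul_assoc, Real.mul_self_sqrt (hw j)]
  have e2 : ∀ j : Fin J, Real.sqrt (w j) ^ 2 = w j := fun j => Real.sq_sqrt (hw j)
  have e3 : ∀ j : Fin J, (Real.sqrt (w j) * Real.sqrt (c j)) ^ 2 = w j * c j := by
    intro j; rw [mul_pow, Real.sq_sqrt (hw j), Real.sq_sqrt (hc j)]
  simp only [e1, e2, e3] at h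
  have hnn : 0 ≤ ∑ j, w j * Real.sqrt (c j) :=
    Finset.sum_nonneg fun j _ => mul_nonneg (hw j) (Real.sqrt_nonneg _)
  have hw' : 0 ≤ ∑ j, w j := Finset.sum_nonneg fun j _ => hw j
  have hc' : 0 ≤ ∑ j, w j * c j := Finset.sum_nonneg fun j _ => mul_nonneg (hw j) (hc j)
  have := (Real.le_sqrt hnn (mul_nonneg hw' hc')).2 h
  rwa [Real.sqrt_mul hw'] at this

lemma per_label {H X : Type*} [NormedAddCommGroup H] [InnerProductSpace ℝ H]
    (Φ : X → H) (r B : ℝ) (hr : 0 ≤ r) (hB : 0 ≤ B) (hΦ : ∀ x, ⟪Φ x, Φ x⟫ ≤ r ^ 2)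
    (m : ℕ) (hm : 1 ≤ m) (ap am : ℝ) (hap : 0 ≤ ap) (ham : 0 ≤ am)
    (xs : Fin m → X × X) (J : ℕ) (I : Fin J → Finset (Fin m))
    (w : Fin J → ℝ) (hw : ∀ j, 0 ≤ w j)
    (hcover : ∀ i, ∑ j ∈ Finset.univ.filter (fun j => i ∈ I j), w j = 1)
    (W : ℝ) (hW : ∑ j, w j = W) :
    ((2:ℝ) ^ (2 * m))⁻¹ * ∑ σ : (Fin m → Bool) × (Fin m → Bool),
        ((m:ℕ):ℝ)⁻¹ * ∑ j, w j * (⨆ v : {v : H // ‖v‖ ≤ B}, ∑ i ∈ I j,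
          ((if σ.1 i then (1:ℝ) else -1) * (ap * ⟪(v:H), Φ (xs i).1⟫)
            + (if σ.2 i then (1:ℝ) else -1) * (am * ⟪(v:H), Φ (xs i).2⟫)))
      ≤ B * r * (ap + am) * (Real.sqrt W * Real.sqrt m / m) := by
  classical
  have hmpos : (0:ℝ) < (m:ℝ) := by exact_mod_cast hm
  haveI : Nonempty {v : H // ‖v‖ ≤ B} := ⟨⟨0, by simpa using hB⟩⟩
  set U : ((Fin m → Bool) × (Fin m → Bool)) → Fin J → H := fun σ j =>
    ∑ i ∈ I j, ((if σ.1 i then (1:ℝ) else -1) • (ap • Φ (xs i).1)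
      + (if σ.2 i then (1:ℝ) else -1) • (am • Φ (xs i).2)) with hU
  -- Step A : the sup is at most B * ‖U σ j‖
  have stepA : ∀ σ j, (⨆ v : {v : H // ‖v‖ ≤ B}, ∑ i ∈ I j,
      ((if σ.1 i then (1:ℝ) else -1) * (ap * ⟪(v:H), Φ (xs i).1⟫)
        + (if σ.2 i then (1:ℝ) else -1) * (am * ⟪(v:H), Φ (xs i).2⟫)))
      ≤ B * ‖U σ j‖ := by
    intro σ j
    refine ciSup_le fun v => ?_
    have hv : (∑ i ∈ I j,
        ((if σ.1 i then (1:ℝ) else -1) * (ap * ⟪(v:H), Φ (xs i).1⟫)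
          + (if σ.2 i then (1:ℝ) else -1) * (am * ⟪(v:H), Φ (xs i).2⟫)))
        = ⟪(v:H), U σ j⟫ := by
      rw [hU]
      rw [inner_sum]
      refine Finset.sum_congr rfl fun i _ => ?_
      rw [inner_add_right, real_inner_smul_right, real_inner_smul_right,
        real_inner_smul_right, real_inner_smul_right]
    rw [hv]
    exact (real_inner_le_norm _ _).trans
      (mul_le_mul_of_nonneg_right v.2 (norm_nonneg _))
  -- Step B : Rademacher average of ‖U σ j‖
  have stepB : ∀ j, ∑ σ : (Fin m → Bool) × (Fin m → Bool), ‖U σ j‖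
      ≤ 2 ^ (2 * m) * (Real.sqrt ((I j).card) * ((ap + am) * r)) := by
    intro j
    set u : (Fin m ⊕ Fin m) → H :=
      Sum.elim (fun i => ap • Φ (xs i).1) (fun i => am • Φ (xs i).2) with hu
    have hre : ∑ σ : (Fin m → Bool) × (Fin m → Bool), ‖U σ j‖
        = ∑ τ : (Fin m ⊕ Fin m) → Bool,
            ‖∑ x ∈ (I j).disjSum (I j), (if τ x then (1:ℝ) else -1) • u x‖ := by
      refine Fintype.sum_equiv (Equiv.sumArrowEquivProdArrow (Fin m) (Fin m) Bool).symm
        _ _ fun σ => ?_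
      congr 1
      rw [hU]
      dsimp only
      rw [Finset.sum_add_distrib, Finset.sum_disjSum]
      rfl
    rw [hre]
    have hk := sum_norm_signs_le ((I j).disjSum (I j)) u
    have hcard : Fintype.card (Fin m ⊕ Fin m) = 2 * m := by simp [two_mul]
    rw [hcard] at hk
    refine hk.trans ?_
    have hq : ∑ x ∈ (I j).disjSum (I j), ‖u x‖ ^ 2
        ≤ ((I j).card : ℝ) * ((ap + am) ^ 2 * r ^ 2) := by
      rw [Finset.sum_disjSum]
      have hb1 : ∀ i ∈ I j, ‖u (Sum.inl i)‖ ^ 2 ≤ ap ^ 2 * r ^ 2 := by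
        intro i _
        rw [hu]
        simp only [Sum.elim_inl, norm_smul, mul_pow, Real.norm_eq_abs, sq_abs]
        have := hΦ (xs i).1
        rw [real_inner_self_eq_norm_sq] at this
        exact mul_le_mul_of_nonneg_left this (by positivity)
      have hb2 : ∀ i ∈ I j, ‖u (Sum.inr i)‖ ^ 2 ≤ am ^ 2 * r ^ 2 := by
        intro i _
        rw [hu]
        simp only [Sum.elim_inr, norm_smul, mul_pow, Real.norm_eq_abs, sq_abs]
        have := hΦ (xs i).2
        rw [real_inner_self_eq_norm_sq] at this
        exact mul_le_mul_of_nonneg_left this (by positivity)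
      calc (∑ i ∈ I j, ‖u (Sum.inl i)‖ ^ 2) + ∑ i ∈ I j, ‖u (Sum.inr i)‖ ^ 2
          ≤ (∑ _i ∈ I j, ap ^ 2 * r ^ 2) + ∑ _i ∈ I j, am ^ 2 * r ^ 2 :=
            add_le_add (Finset.sum_le_sum hb1) (Finset.sum_le_sum hb2)
        _ = ((I j).card : ℝ) * ((ap ^ 2 + am ^ 2) * r ^ 2) := by
            rw [Finset.sum_const, Finset.sum_const]; ring
        _ ≤ ((I j).card : ℝ) * ((ap + am) ^ 2 * r ^ 2) := by
            have : ap ^ 2 + am ^ 2 ≤ (ap + am) ^ 2 := by nlinarith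
            have hrr : (0:ℝ) ≤ r ^ 2 := sq_nonneg r
            have hcnn : (0:ℝ) ≤ ((I j).card : ℝ) := Nat.cast_nonneg _
            exact mul_le_mul_of_nonneg_left (mul_le_mul_of_nonneg_right this hrr) hcnn
    have : Real.sqrt (∑ x ∈ (I j).disjSum (I j), ‖u x‖ ^ 2)
        ≤ Real.sqrt ((I j).card) * ((ap + am) * r) := by
      refine (Real.sqrt_le_sqrt hq).trans ?_
      rw [Real.sqrt_mul (Nat.cast_nonneg _), ← mul_pow, Real.sqrt_sq (by positivity)]
    have h2m : (0:ℝ) ≤ 2 ^ (2 * m) := by positivity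
    exact mul_le_mul_of_nonneg_left this h2m
  -- Step C : weighted Cauchy-Schwarz
  have hwm : ∑ j, w j * ((I j).card : ℝ) = (m : ℝ) := by
    have e1 : ∀ j : Fin J, w j * ((I j).card : ℝ)
        = ∑ i : Fin m, (if i ∈ I j then w j else 0) := by
      intro j
      rw [Finset.sum_ite_mem, Finset.univ_inter, Finset.sum_const, nsmul_eq_mul, mul_comm]
    calc ∑ j, w j * ((I j).card : ℝ)
        = ∑ j, ∑ i : Fin m, (if i ∈ I j then w j else 0) := Finset.sum_congr rfl fun j _ => e1 j
      _ = ∑ i : Fin m, ∑ j, (if i ∈ I j then w j else 0) := Finset.sum_comm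
      _ = ∑ _i : Fin m, (1:ℝ) := by
          refine Finset.sum_congr rfl fun i _ => ?_
          rw [← Finset.sum_filter]
          exact hcover i
      _ = (m : ℝ) := by simp
  have stepC : ∑ j, w j * Real.sqrt ((I j).card)
      ≤ Real.sqrt W * Real.sqrt m := by
    have := sum_w_sqrt_le w hw (fun j => ((I j).card : ℝ)) (fun j => Nat.cast_nonneg _)
    rwa [hW, hwm] at this
  -- Combine
  have main : ∑ σ : (Fin m → Bool) × (Fin m → Bool),
      ((m:ℕ):ℝ)⁻¹ * ∑ j, w j * (⨆ v : {v : H // ‖v‖ ≤ B}, ∑ i ∈ I j,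
        ((if σ.1 i then (1:ℝ) else -1) * (ap * ⟪(v:H), Φ (xs i).1⟫)
          + (if σ.2 i then (1:ℝ) else -1) * (am * ⟪(v:H), Φ (xs i).2⟫)))
      ≤ ((m:ℕ):ℝ)⁻¹ * ∑ j, w j * (B * (2 ^ (2 * m) * (Real.sqrt ((I j).card) * ((ap + am) * r)))) := by
    rw [← Finset.mul_sum]
    refine mul_le_mul_of_nonneg_left ?_ (by positivity)
    calc ∑ σ : (Fin m → Bool) × (Fin m → Bool), ∑ j, w j * (⨆ v : {v : H // ‖v‖ ≤ B}, _)
        ≤ ∑ σ : (Fin m → Bool) × (Fin m → Bool), ∑ j, w j * (B * ‖U σ j‖) := by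
          refine Finset.sum_le_sum fun σ _ => Finset.sum_le_sum fun j _ => ?_
          exact mul_le_mul_of_nonneg_left (stepA σ j) (hw j)
      _ = ∑ j, w j * (B * ∑ σ : (Fin m → Bool) × (Fin m → Bool), ‖U σ j‖) := by
          rw [Finset.sum_comm]
          refine Finset.sum_congr rfl fun j _ => ?_
          rw [← Finset.mul_sum, ← Finset.mul_sum]
      _ ≤ ∑ j, w j * (B * (2 ^ (2 * m) * (Real.sqrt ((I j).card) * ((ap + am) * r)))) := by
          refine Finset.sum_le_sum fun j _ => ?_
          exact mul_le_mul_of_nonneg_left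
            (mul_le_mul_of_nonneg_left (stepB j) hB) (hw j)
  refine (mul_le_mul_of_nonneg_left main (by positivity)).trans ?_
  have hfinal : ((2:ℝ) ^ (2 * m))⁻¹ * (((m:ℕ):ℝ)⁻¹ *
      ∑ j, w j * (B * (2 ^ (2 * m) * (Real.sqrt ((I j).card) * ((ap + am) * r)))))
      = (B * (ap + am) * r / m) * ∑ j, w j * Real.sqrt ((I j).card) := by
    rw [Finset.mul_sum, Finset.mul_sum, Finset.mul_sum]
    refine Finset.sum_congr rfl fun j _ => ?_
    have h2 : ((2:ℝ) ^ (2 * m)) ≠ 0 := by positivity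
    field_simp
  rw [hfinal]
  have hBr : 0 ≤ B * (ap + am) * r / m := by positivity
  calc (B * (ap + am) * r / m) * ∑ j, w j * Real.sqrt ((I j).card)
      ≤ (B * (ap + am) * r / m) * (Real.sqrt W * Real.sqrt m) :=
        mul_le_mul_of_nonneg_left stepC hBr
    _ = B * r * (ap + am) * (Real.sqrt W * Real.sqrt m / m) := by ring

lemma sqrt_ratio (x y : ℝ) (hx : 0 < x) (hy : 0 < y) :
    Real.sqrt x * Real.sqrt (x * y) / (x * y) = 1 / Real.sqrt y := by
  have h1 : Real.sqrt x * (Real.sqrt x * Real.sqrt y) = x * Real.sqrt y := by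
    rw [← mul_assoc, Real.mul_self_sqrt hx.le]
  rw [Real.sqrt_mul hx.le, h1, eq_div_iff (by positivity : Real.sqrt y ≠ 0),
    div_mul_eq_mul_div, mul_assoc, Real.mul_self_sqrt hy.le]
  exact div_self (by positivity)

lemma arith_step (p q n : ℕ) (hp : 1 ≤ p) (hq : 1 ≤ q) (hn : p + q = n) :
    Real.sqrt (max (p:ℝ) (q:ℝ)) * Real.sqrt ((p * q : ℕ) : ℝ) / ((p * q : ℕ) : ℝ)
      = Real.sqrt (1 / (min (p:ℝ) (q:ℝ) / n)) / Real.sqrt n := by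
  have hppos : (0:ℝ) < (p:ℝ) := by exact_mod_cast hp
  have hqpos : (0:ℝ) < (q:ℝ) := by exact_mod_cast hq
  have hmxpos : (0:ℝ) < max (p:ℝ) (q:ℝ) := lt_max_of_lt_left hppos
  have hmnpos : (0:ℝ) < min (p:ℝ) (q:ℝ) := lt_min hppos hqpos
  have hnpos : (0:ℝ) < (n:ℝ) := by
    have : 0 < n := by omega
    exact_mod_cast this
  have hmm : ((p * q : ℕ):ℝ) = max (p:ℝ) (q:ℝ) * min (p:ℝ) (q:ℝ) := by
    rcases le_total (p:ℝ) (q:ℝ) with h | h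
    · rw [max_eq_right h, min_eq_left h]; push_cast; ring
    · rw [max_eq_left h, min_eq_right h]; push_cast; ring
  rw [hmm, sqrt_ratio _ _ hmxpos hmnpos, one_div_div, Real.sqrt_div hnpos.le,
    div_right_comm, div_self (by positivity : Real.sqrt (n:ℝ) ≠ 0)]

/-- **Fractional Rademacher complexity of the kernel-based hypothesis class for
(reweighted) univariate losses**
(Lemma `lem:app_frac_rade_kernel_hypothesis_univariate_general` together with
Proposition `pro:app_frac_rade_kernel_hypothesis_univariate_specific`), with the
Rademacher expectations realized as finite averages over sign vectors. -/
theorem fracRad_kernel_univariate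
    {H X : Type*} [NormedAddCommGroup H] [InnerProductSpace ℝ H]
    (Φ : X → H) (r : ℝ) (hr : 0 < r) (hΦ : ∀ x, ⟪Φ x, Φ x⟫ ≤ r ^ 2)
    (K n : ℕ) (hK : 1 ≤ K) (hn : 2 ≤ n)
    (np nm : Fin K → ℕ) (hnp : ∀ k, 1 ≤ np k) (hnm : ∀ k, 1 ≤ nm k)
    (hsum : ∀ k, np k + nm k = n)
    (ap am : Fin K → ℝ) (hap : ∀ k, 0 ≤ ap k) (ham : ∀ k, 0 ≤ am k)
    (xs : (k : Fin K) → Fin (np k * nm k) → X × X)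
    (J : Fin K → ℕ)
    (I : (k : Fin K) → Fin (J k) → Finset (Fin (np k * nm k)))
    (w : (k : Fin K) → Fin (J k) → ℝ) (hw : ∀ k j, 0 < w k j)
    (hcover : ∀ k (i : Fin (np k * nm k)),
      ∑ j ∈ Finset.univ.filter (fun j => i ∈ I k j), w k j = 1)
    (hchrom : ∀ k, ∑ j, w k j = (max (np k) (nm k) : ℝ))
    (B : ℝ) (hB : 0 ≤ B) :
    ((K : ℝ)⁻¹ * ∑ k : Fin K,
        ((2 : ℝ) ^ (2 * (np k * nm k)))⁻¹ *
          ∑ σ : (Fin (np k * nm k) → Bool) × (Fin (np k * nm k) → Bool),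
            ((np k * nm k : ℕ) : ℝ)⁻¹ * ∑ j : Fin (J k), w k j *
              ⨆ v : {v : H // ‖v‖ ≤ B}, ∑ i ∈ I k j,
                ((if σ.1 i then (1 : ℝ) else -1) * (ap k * ⟪(v : H), Φ (xs k i).1⟫)
                  + (if σ.2 i then (1 : ℝ) else -1) * (am k * ⟪(v : H), Φ (xs k i).2⟫))
      ≤ B * r / Real.sqrt n *
          ((K : ℝ)⁻¹ * ∑ k : Fin K,
            Real.sqrt (1 / ((min (np k) (nm k) : ℝ) / n)) * (ap k + am k))) ∧
    (B * r / Real.sqrt n *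
        ((K : ℝ)⁻¹ * ∑ k : Fin K,
          Real.sqrt (1 / ((min (np k) (nm k) : ℝ) / n))
            * ((np k : ℝ) / n + (nm k : ℝ) / n))
      ≤ B * r / Real.sqrt n *
          ((K : ℝ)⁻¹ * ∑ k : Fin K, Real.sqrt (1 / ((min (np k) (nm k) : ℝ) / n)))) ∧
    (B * r / Real.sqrt n *
        ((K : ℝ)⁻¹ * ∑ k : Fin K,
          Real.sqrt (1 / ((min (np k) (nm k) : ℝ) / n)) * ((1 : ℝ) + 1))
      = 2 * B * r / Real.sqrt n *
          ((K : ℝ)⁻¹ * ∑ k : Fin K, Real.sqrt (1 / ((min (np k) (nm k) : ℝ) / n)))) := by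
  have hnpos : (0:ℝ) < (n:ℝ) := by
    have : 0 < n := by omega
    exact_mod_cast this
  refine ⟨?_, ?_, ?_⟩
  · -- main inequality
    have hterm : ∀ k : Fin K,
        ((2 : ℝ) ^ (2 * (np k * nm k)))⁻¹ *
          ∑ σ : (Fin (np k * nm k) → Bool) × (Fin (np k * nm k) → Bool),
            ((np k * nm k : ℕ) : ℝ)⁻¹ * ∑ j : Fin (J k), w k j *
              ⨆ v : {v : H // ‖v‖ ≤ B}, ∑ i ∈ I k j,
                ((if σ.1 i then (1 : ℝ) else -1) * (ap k * ⟪(v : H), Φ (xs k i).1⟫)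
                  + (if σ.2 i then (1 : ℝ) else -1) * (am k * ⟪(v : H), Φ (xs k i).2⟫))
        ≤ B * r / Real.sqrt n *
            (Real.sqrt (1 / ((min (np k) (nm k) : ℝ) / n)) * (ap k + am k)) := by
      intro k
      have hm : 1 ≤ np k * nm k := Nat.mul_pos (hnp k) (hnm k)
      have h1 := per_label Φ r B hr.le hB hΦ (np k * nm k) hm (ap k) (am k) (hap k) (ham k)
        (xs k) (J k) (I k) (w k) (fun j => (hw k j).le) (hcover k)
        (max ((np k : ℝ)) ((nm k : ℝ))) (hchrom k)
      refine h1.trans (le_of_eq ?_)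
      have ha := arith_step (np k) (nm k) n (hnp k) (hnm k) (hsum k)
      rw [ha]
      ring
    have hre : B * r / Real.sqrt n *
        ((K : ℝ)⁻¹ * ∑ k : Fin K,
          Real.sqrt (1 / ((min (np k) (nm k) : ℝ) / n)) * (ap k + am k))
        = (K : ℝ)⁻¹ * ∑ k : Fin K, B * r / Real.sqrt n *
            (Real.sqrt (1 / ((min (np k) (nm k) : ℝ) / n)) * (ap k + am k)) := by
      rw [← Finset.mul_sum]; ring
    rw [hre]
    exact mul_le_mul_of_nonneg_left (Finset.sum_le_sum fun k _ => hterm k) (by positivity)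
  · refine le_of_eq ?_
    have h1 : ∀ k : Fin K, ((np k : ℝ) / n + (nm k : ℝ) / n) = 1 := by
      intro k
      rw [← add_div, show ((np k : ℝ) + (nm k : ℝ)) = (n:ℝ) from by
        exact_mod_cast hsum k, div_self hnpos.ne']
    have h2 : ∑ k : Fin K,
        Real.sqrt (1 / ((min (np k) (nm k) : ℝ) / n)) * ((np k : ℝ) / n + (nm k : ℝ) / n)
        = ∑ k : Fin K, Real.sqrt (1 / ((min (np k) (nm k) : ℝ) / n)) :=
      Finset.sum_congr rfl fun k _ => by rw [h1 k, mul_one]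
    rw [h2]
  · have h2 : ∑ k : Fin K,
        Real.sqrt (1 / ((min (np k) (nm k) : ℝ) / n)) * ((1:ℝ) + 1)
        = 2 * ∑ k : Fin K, Real.sqrt (1 / ((min (np k) (nm k) : ℝ) / n)) := by
      rw [Finset.mul_sum]
      exact Finset.sum_congr rfl fun k _ => by ring
    rw [h2]
    ring
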